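/- Let a : ℤ → ℂ be not generic, let v ∈ a^⊥ be nonzero with ω(v) = m minimal among all nonzero elements of a^⊥. Then the family consisting of all integer shifts (v^{(n)})_{n∈ℤ} together with the standard basis vectors v_0, v_1, …, v_{m−1} (the indicator functions of 0, 1, …, m−1; an empty collection when m = 0) is a basis of V = ℤ →₀ ℂ. -/

import Mathlib

/-- For `x : ℤ → ℂ` and `n : ℤ`, the shift `x^{(n)}` is `i ↦ x (i + n)`. -/
def shiftFun (a : ℤ → ℂ) (n : ℤ) : ℤ → ℂ := fun i => a (i + n)

/-- The shift of a finitely supported function `v : ℤ →₀ ℂ`: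
`(shiftV v n) i = v (i + n)`. -/
noncomputable def shiftV (v : ℤ →₀ ℂ) (n : ℤ) : ℤ →₀ ℂ :=
  Finsupp.equivMapDomain (Equiv.addRight n).symm v

/-- The shift, as a linear map. -/
noncomputable def shiftVL (n : ℤ) : (ℤ →₀ ℂ) →ₗ[ℂ] (ℤ →₀ ℂ) :=
  (Finsupp.domLCongr (Equiv.addRight n).symm).toLinearMap

/-- `a^⊥`: the subspace of all `v ∈ ℤ →₀ ℂ` such that `⟨a, v^{(n)}⟩ = 0` for all
`n ∈ ℤ`, where `⟨a, w⟩ = ∑ i, a i * w i`. -/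
noncomputable def perp (a : ℤ → ℂ) : Submodule ℂ (ℤ →₀ ℂ) :=
  ⨅ n : ℤ, LinearMap.ker ((Finsupp.linearCombination ℂ a).comp (shiftVL n))

/-- `ω(v) = r(v) - l(v)`, the difference between the maximum and the minimum of
the support of `v` (junk value `0` for `v = 0`). -/
noncomputable def omegaV (v : ℤ →₀ ℂ) : ℕ :=
  ((WithBot.unbotD 0 v.support.max) - (WithTop.untopD 0 v.support.min)).toNat

lemma shiftV_apply (v : ℤ →₀ ℂ) (n i : ℤ) : shiftV v n i = v (i + n) := by
  simp [shiftV, Finsupp.equivMapDomain_apply]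

lemma shiftVL_eq (n : ℤ) (w : ℤ →₀ ℂ) : shiftVL n w = shiftV w n := by
  ext i
  simp [shiftVL, shiftV, Finsupp.equivMapDomain_apply]

lemma shiftV_shiftV (v : ℤ →₀ ℂ) (k n : ℤ) : shiftV (shiftV v k) n = shiftV v (n + k) := by
  ext i
  simp [shiftV_apply, add_assoc]

lemma mem_perp_shift (a : ℤ → ℂ) (v : ℤ →₀ ℂ) (hv : v ∈ perp a) (k : ℤ) :
    shiftV v k ∈ perp a := by
  simp only [perp, Submodule.mem_iInf, LinearMap.mem_ker, LinearMap.comp_apply] at hv ⊢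
  intro n
  rw [shiftVL_eq, shiftV_shiftV, ← shiftVL_eq]
  exact hv (n + k)

lemma omegaV_eq (w : ℤ →₀ ℂ) (h : w.support.Nonempty) :
    omegaV w = (w.support.max' h - w.support.min' h).toNat := by
  rw [omegaV, ← Finset.coe_max' h, ← Finset.coe_min' h]
  rfl

lemma single_mem_of (S : Submodule ℂ (ℤ →₀ ℂ)) (w : ℤ →₀ ℂ) (i : ℤ)
    (hi : w i ≠ 0) (hw : w ∈ S)
    (hj : ∀ j, w j ≠ 0 → j ≠ i → Finsupp.single j (1 : ℂ) ∈ S) :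
    Finsupp.single i (1 : ℂ) ∈ S := by
  have hrest : ∑ j ∈ w.support.erase i, Finsupp.single j (w j) ∈ S := by
    apply Submodule.sum_mem
    intro j hjmem
    have hj1 := Finsupp.mem_support_iff.mp (Finset.mem_of_mem_erase hjmem)
    have hj2 := Finset.ne_of_mem_erase hjmem
    have heq : Finsupp.single j (w j) = (w j) • Finsupp.single j (1 : ℂ) := by
      rw [Finsupp.smul_single, smul_eq_mul, mul_one]
    rw [heq]
    exact Submodule.smul_mem _ _ (hj j hj1 hj2)
  have hi' : i ∈ w.support := Finsupp.mem_support_iff.mpr hi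
  have h1 : ∑ j ∈ w.support, Finsupp.single j (w j) = w := Finsupp.sum_single w
  rw [← Finset.add_sum_erase _ _ hi'] at h1
  have hsingle : Finsupp.single i (w i) ∈ S := by
    have : Finsupp.single i (w i) = w - ∑ j ∈ w.support.erase i, Finsupp.single j (w j) :=
      eq_sub_of_add_eq h1
    rw [this]
    exact Submodule.sub_mem _ hw hrest
  have : Finsupp.single i (1 : ℂ) = (w i)⁻¹ • Finsupp.single i (w i) := by
    rw [Finsupp.smul_single, smul_eq_mul, inv_mul_cancel₀ hi]
  rw [this]
  exact Submodule.smul_mem _ _ hsingle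

/-- If `a` is not generic and `v ∈ a^⊥` is nonzero with `ω(v) = m` minimal, then
the integer shifts of `v` together with the standard basis vectors
`v_0, …, v_{m-1}` form a basis of `ℤ →₀ ℂ`. -/
theorem shifts_extend_to_basis (a : ℤ → ℂ)
    (ha : ¬ LinearIndependent ℂ (fun n : ℤ => shiftFun a n))
    (v : ℤ →₀ ℂ) (hv : v ∈ perp a) (hv0 : v ≠ 0)
    (hmin : ∀ w ∈ perp a, w ≠ 0 → omegaV v ≤ omegaV w) :
    LinearIndependent ℂ
      (Sum.elim (fun n : ℤ => shiftV v n)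
        (fun k : Fin (omegaV v) => Finsupp.single ((k : ℕ) : ℤ) (1 : ℂ))) ∧
    Submodule.span ℂ
      (Set.range (Sum.elim (fun n : ℤ => shiftV v n)
        (fun k : Fin (omegaV v) => Finsupp.single ((k : ℕ) : ℤ) (1 : ℂ)))) = ⊤ := by
  classical
  set m := omegaV v with hm
  have hne : v.support.Nonempty := Finsupp.support_nonempty_iff.mpr hv0
  set l := v.support.min' hne with hldef
  set r := v.support.max' hne with hrdef
  have hl : v l ≠ 0 := Finsupp.mem_support_iff.mp (v.support.min'_mem hne)
  have hr : v r ≠ 0 := Finsupp.mem_support_iff.mp (v.support.max'_mem hne)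
  have hbound : ∀ x, v x ≠ 0 → l ≤ x ∧ x ≤ r := fun x hx =>
    ⟨v.support.min'_le x (Finsupp.mem_support_iff.mpr hx),
     v.support.le_max' x (Finsupp.mem_support_iff.mpr hx)⟩
  have hlr : l ≤ r := (hbound l hl).2
  have hmr : (m : ℤ) = r - l := by
    rw [hm, omegaV_eq v hne, ← hldef, ← hrdef]
    omega
  -- minimality: elements of perp with support in [0, m) are zero
  have hkey : ∀ w ∈ perp a, (∀ j ∈ w.support, 0 ≤ j ∧ j < (m : ℤ)) → w = 0 := by
    intro w hwp hsupp
    by_contra hw0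
    have hne' : w.support.Nonempty := Finsupp.support_nonempty_iff.mpr hw0
    have h1 := hmin w hwp hw0
    have h2 : omegaV w = (w.support.max' hne' - w.support.min' hne').toNat := omegaV_eq w hne'
    have hmax := hsupp _ (w.support.max'_mem hne')
    have hmin' := hsupp _ (w.support.min'_mem hne')
    omega
  have hshift_mem : ∀ n, shiftV v n ∈ perp a := fun n => mem_perp_shift a v hv n
  -- independence of shifts
  have hindL : LinearIndependent ℂ (fun n : ℤ => shiftV v n) := by
    rw [linearIndependent_iff]
    intro c hc
    by_contra hc0
    have hcs : c.support.Nonempty := Finsupp.support_nonempty_iff.mpr hc0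
    set p := c.support.min' hcs with hp
    have hcp : c p ≠ 0 := Finsupp.mem_support_iff.mp (c.support.min'_mem hcs)
    have heval := congrArg (fun f : ℤ →₀ ℂ => f (r - p)) hc
    simp only [Finsupp.linearCombination_apply, Finsupp.sum, Finsupp.finset_sum_apply,
      Finsupp.smul_apply, shiftV_apply, smul_eq_mul, Finsupp.coe_zero, Pi.zero_apply] at heval
    rw [Finset.sum_eq_single p] at heval
    · have : r - p + p = r := by omega
      rw [this] at heval
      exact (mul_ne_zero hcp hr) heval
    · intro n hn hnp
      have hpn : p < n := lt_of_le_of_ne (c.support.min'_le n hn) (Ne.symm hnp)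
      have hz : v (r - p + n) = 0 := by
        by_contra h
        have := (hbound _ h).2
        omega
      rw [hz, mul_zero]
    · intro h
      exact absurd (c.support.min'_mem hcs) h
  -- independence of singles
  have hindR : LinearIndependent ℂ (fun k : Fin m => Finsupp.single ((k : ℕ) : ℤ) (1 : ℂ)) := by
    have hb := (Finsupp.basisSingleOne (R := ℂ) (ι := ℤ)).linearIndependent
    have hinj : Function.Injective (fun k : Fin m => ((k : ℕ) : ℤ)) := by
      intro x y h
      simpa [Fin.ext_iff] using h
    have h2 := hb.comp _ hinj
    simpa [Function.comp_def, Finsupp.coe_basisSingleOne] using h2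
  -- disjointness of spans
  have hdisj : Disjoint (Submodule.span ℂ (Set.range fun n : ℤ => shiftV v n))
      (Submodule.span ℂ (Set.range fun k : Fin m => Finsupp.single ((k : ℕ) : ℤ) (1 : ℂ))) := by
    rw [Submodule.disjoint_def]
    intro w hw1 hw2
    apply hkey w
    · refine Submodule.span_le.mpr ?_ hw1
      rintro _ ⟨n, rfl⟩
      exact hshift_mem n
    · have hsupported : Submodule.span ℂ
          (Set.range fun k : Fin m => Finsupp.single ((k : ℕ) : ℤ) (1 : ℂ)) ≤
          Finsupp.supported ℂ ℂ {j : ℤ | 0 ≤ j ∧ j < (m : ℤ)} := by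
        apply Submodule.span_le.mpr
        rintro _ ⟨k, rfl⟩
        rw [SetLike.mem_coe, Finsupp.mem_supported]
        intro j hj
        rw [Finsupp.support_single_ne_zero _ one_ne_zero, Finset.mem_coe,
          Finset.mem_singleton] at hj
        subst hj
        exact ⟨Int.natCast_nonneg _, by exact_mod_cast k.2⟩
      have := hsupported hw2
      rw [Finsupp.mem_supported] at this
      intro j hj
      exact this hj
  refine ⟨hindL.sum_type hindR hdisj, ?_⟩
  -- spanning
  set S := Submodule.span ℂ
      (Set.range (Sum.elim (fun n : ℤ => shiftV v n)
        (fun k : Fin m => Finsupp.single ((k : ℕ) : ℤ) (1 : ℂ)))) with hS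
  have hmemL : ∀ n, shiftV v n ∈ S := fun n => Submodule.subset_span ⟨Sum.inl n, rfl⟩
  have hmemR : ∀ k : Fin m, Finsupp.single ((k : ℕ) : ℤ) (1 : ℂ) ∈ S := fun k =>
    Submodule.subset_span ⟨Sum.inr k, rfl⟩
  have hstep : ∀ N : ℕ, ∀ i : ℤ, -(N : ℤ) ≤ i → i ≤ (m : ℤ) - 1 + N →
      Finsupp.single i (1 : ℂ) ∈ S := by
    intro N
    induction N with
    | zero =>
      intro i h1 h2
      have hk : i.toNat < m := by omega
      have hco : ((⟨i.toNat, hk⟩ : Fin m) : ℤ) = i := by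
        simp only [Fin.val_mk]
        omega
      have := hmemR ⟨i.toNat, hk⟩
      rwa [hco] at this
    | succ N IH =>
      intro i h1 h2
      by_cases hcase : -(N : ℤ) ≤ i ∧ i ≤ (m : ℤ) - 1 + N
      · exact IH i hcase.1 hcase.2
      · push_neg at hcase
        have hor : i = -((N : ℤ) + 1) ∨ i = (m : ℤ) + N := by
          push_cast at h1 h2 ⊢
          omega
        rcases hor with hI | hI
        · apply single_mem_of S (shiftV v (l + N + 1)) i
          · rw [shiftV_apply, hI]
            have h3 : -((N : ℤ) + 1) + (l + N + 1) = l := by ring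
            rw [h3]
            exact hl
          · exact hmemL _
          · intro j hjne hji
            rw [shiftV_apply] at hjne
            obtain ⟨hb1, hb2⟩ := hbound _ hjne
            apply IH j <;> omega
        · apply single_mem_of S (shiftV v (l - N)) i
          · rw [shiftV_apply]
            have h3 : i + (l - N) = r := by omega
            rw [h3]
            exact hr
          · exact hmemL _
          · intro j hjne hji
            rw [shiftV_apply] at hjne
            obtain ⟨hb1, hb2⟩ := hbound _ hjne
            apply IH j <;> omega
  have hall : ∀ i : ℤ, Finsupp.single i (1 : ℂ) ∈ S := by
    intro i
    exact hstep (i.natAbs + 1) i (by omega) (by omega)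
  rw [eq_top_iff]
  intro f _
  have hf : ∑ j ∈ f.support, Finsupp.single j (f j) = f := Finsupp.sum_single f
  rw [← hf]
  apply Submodule.sum_mem
  intro j _
  have heq : Finsupp.single j (f j) = (f j) • Finsupp.single j (1 : ℂ) := by
    rw [Finsupp.smul_single, smul_eq_mul, mul_one]
  rw [heq]
  exact Submodule.smul_mem _ _ (hall j)
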